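/- arXiv:1602.04254 — 2 statements merged into one kernel-verified Lean document; each statement's English description precedes it below -/
import Mathlib

section
/- Let k be a perfect field of characteristic p, n ≥ m ≥ 1 integers, E a free W_n(k)-module, and let G_{m} = Z/p^{m}Z act on E^{⊗p^m} (tensor power over W_n(k)) by cyclic permutation, with G_{m+1} acting through the quotient G_{m+1} → G_m. If a, b ∈ E satisfy a ≡ b (mod p), then the images of a^{⊗p^m} and b^{⊗p^m} in the Tate cohomology group Ȟ⁰(G_{m+1}, E^{⊗p^m}) coincide, and likewise their images in Ȟ⁰(G_m, E^{⊗p^m}) coincide. -/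
open scoped TensorProduct

set_option linter.unusedVariables false

namespace Stmt10Aux

open PiTensorProduct Finset

variable {N : ℕ}

def shf (g : ZMod N) (S : Finset (ZMod N)) : Finset (ZMod N) :=
  S.map (Equiv.addRight g).toEmbedding

lemma mem_shf {g : ZMod N} {S : Finset (ZMod N)} {i : ZMod N} :
    i ∈ shf g S ↔ i - g ∈ S := by
  simp [shf, Finset.mem_map_equiv, sub_eq_add_neg]

lemma shf_zero (S : Finset (ZMod N)) : shf 0 S = S := by ext i; simp [mem_shf]

lemma shf_add (g h : ZMod N) (S : Finset (ZMod N)) : shf (g + h) S = shf g (shf h S) := by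
  ext i; simp [mem_shf, sub_sub]

lemma card_shf (g : ZMod N) (S : Finset (ZMod N)) : (shf g S).card = S.card :=
  Finset.card_map _

lemma shf_inj {g : ZMod N} {S T : Finset (ZMod N)} (h : shf g S = shf g T) : S = T := by
  ext i
  have := Finset.ext_iff.1 h (i + g)
  simpa [mem_shf] using this

lemma shf_nonempty {g : ZMod N} {S : Finset (ZMod N)} (h : S.Nonempty) : (shf g S).Nonempty := by
  obtain ⟨x, hx⟩ := h
  exact ⟨x + g, by simpa [mem_shf] using hx⟩

section Per
variable [NeZero N]

lemma exists_per (S : Finset (ZMod N)) : ∃ j : ℕ, 0 < j ∧ shf (j : ZMod N) S = S :=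
  ⟨N, Nat.pos_of_ne_zero (NeZero.ne N), by simp [shf_zero]⟩

/-- The minimal period of `S` under shifting. -/
def per (S : Finset (ZMod N)) : ℕ := Nat.find (exists_per S)

lemma per_pos (S : Finset (ZMod N)) : 0 < per S := (Nat.find_spec (exists_per S)).1

lemma shf_per (S : Finset (ZMod N)) : shf (per S : ZMod N) S = S :=
  (Nat.find_spec (exists_per S)).2

lemma shf_mul_per (S : Finset (ZMod N)) (k : ℕ) : shf ((k * per S : ℕ) : ZMod N) S = S := by
  induction k with
  | zero => simpa using shf_zero S
  | succ k ih =>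
      have : ((k + 1) * per S : ℕ) = per S + k * per S := by ring
      rw [this, Nat.cast_add, shf_add, ih, shf_per]

lemma per_dvd_iff (S : Finset (ZMod N)) (j : ℕ) :
    shf (j : ZMod N) S = S ↔ per S ∣ j := by
  constructor
  · intro h
    have hdecomp : j = j % per S + (j / per S) * per S := by
      rw [Nat.mod_add_div']
    have h2 : shf ((j % per S : ℕ) : ZMod N) S = S := by
      have := shf_mul_per S (j / per S)
      calc shf ((j % per S : ℕ) : ZMod N) S
          = shf ((j % per S : ℕ) : ZMod N) (shf (((j / per S) * per S : ℕ) : ZMod N) S) := by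
            rw [this]
        _ = shf ((j : ℕ) : ZMod N) S := by rw [← shf_add, ← Nat.cast_add, ← hdecomp]
        _ = S := h
    by_contra hnd
    have hmodpos : 0 < j % per S := Nat.pos_of_ne_zero fun h0 => hnd (Nat.dvd_of_mod_eq_zero h0)
    exact Nat.find_min (exists_per S) (Nat.mod_lt _ (per_pos S)) ⟨hmodpos, h2⟩
  · rintro ⟨k, rfl⟩
    rw [mul_comm]; exact shf_mul_per S k

lemma per_dvd (S : Finset (ZMod N)) : per S ∣ N :=
  (per_dvd_iff S N).1 (by simp [shf_zero])

/-- Every element of the stabilizer is a multiple of the period. -/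
lemma per_dvd_val {S : Finset (ZMod N)} {g : ZMod N} (h : shf g S = S) :
    per S ∣ g.val := by
  rw [← per_dvd_iff]
  rwa [ZMod.natCast_val, ZMod.cast_id]

/-- If `S` is nonempty, its cardinality is at least `N / per S`. -/
lemma card_ge (S : Finset (ZMod N)) (hS : S.Nonempty) : N / per S ≤ S.card := by
  obtain ⟨x, hx⟩ := hS
  have hmem : ∀ t : ℕ, x + ((t * per S : ℕ) : ZMod N) ∈ S := by
    intro t
    have h := shf_mul_per S t
    have h2 : x + ((t * per S : ℕ) : ZMod N) ∈ shf ((t * per S : ℕ) : ZMod N) S := by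
      simpa [mem_shf] using hx
    rwa [h] at h2
  have hlt : ∀ t : ℕ, t < N / per S → t * per S < N := by
    intro t ht
    calc t * per S < (N / per S) * per S := (Nat.mul_lt_mul_right (per_pos S)).2 ht
      _ = N := Nat.div_mul_cancel (per_dvd S)
  have hinj : Set.InjOn (fun t : ℕ => x + ((t * per S : ℕ) : ZMod N))
      ↑(Finset.range (N / per S)) := by
    intro t ht u hu htu
    simp only [Finset.coe_range, Set.mem_Iio] at ht hu
    have h1 : ((t * per S : ℕ) : ZMod N) = ((u * per S : ℕ) : ZMod N) :=
      add_left_cancel htu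
    have h2 : t * per S = u * per S := by
      have := congrArg ZMod.val h1
      rwa [ZMod.val_natCast_of_lt (hlt t ht), ZMod.val_natCast_of_lt (hlt u hu)] at this
    exact Nat.eq_of_mul_eq_mul_right (per_pos S) h2
  have := Finset.card_le_card_of_injOn (fun t : ℕ => x + ((t * per S : ℕ) : ZMod N))
    (fun t _ => hmem t) hinj
  simpa using this


end Per

set_option linter.unusedSectionVars false

section Tensor
variable [NeZero N]

variable {R : Type*} [CommRing R] {M : Type*} [AddCommGroup M] [Module R M]

variable (R) in
/-- The basic "mixed" tensor: `c` on positions in `S`, `b` elsewhere. -/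
noncomputable def tS (b c : M) (S : Finset (ZMod N)) : ⨂[R] _ : ZMod N, M :=
  tprod R (fun i => if i ∈ S then c else b)

variable (P : (⨂[R] _ : ZMod N, M) →ₗ[R] ⨂[R] _ : ZMod N, M)
  (hP : P = (PiTensorProduct.reindex R (fun _ : ZMod N => M)
    (Equiv.addLeft (1 : ZMod N))).toLinearMap)

include hP

lemma pow_tprod (k : ℕ) (f : ZMod N → M) :
    (P ^ k) (tprod R f) = tprod R (fun i => f (i - (k : ZMod N))) := by
  induction k with
  | zero => simp
  | succ k ih =>
      rw [pow_succ', Module.End.mul_apply, ih, hP, LinearEquiv.coe_coe,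
        PiTensorProduct.reindex_tprod]
      congr 1
      funext i
      congr 1
      show ((Equiv.addLeft (1 : ZMod N)).symm i) - (k : ZMod N) = i - ((k : ℕ) + 1 : ℕ)
      push_cast
      simp only [Equiv.addLeft_symm_apply]
      ring

lemma pow_tS (b c : M) (k : ℕ) (S : Finset (ZMod N)) :
    (P ^ k) (tS R b c S) = tS R b c (shf (k : ZMod N) S) := by
  rw [tS, pow_tprod P hP]
  congr 1
  funext i
  by_cases h : i - (k : ZMod N) ∈ S <;> simp [tS, mem_shf, h]

omit hP in
lemma pow_mul_fix (v : ⨂[R] _ : ZMod N, M) (d : ℕ) (hd : (P ^ d) v = v) (k : ℕ) :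
    (P ^ (k * d)) v = v := by
  induction k with
  | zero => simp
  | succ k ih => rw [add_mul, one_mul, pow_add, Module.End.mul_apply, hd, ih]

omit hP in
lemma sum_pow_mul (v : ⨂[R] _ : ZMod N, M) (d e : ℕ) (hd : (P ^ d) v = v) :
    ∑ j ∈ Finset.range (e * d), (P ^ j) v = e • ∑ j ∈ Finset.range d, (P ^ j) v := by
  induction e with
  | zero => simp
  | succ e ih =>
      rw [add_mul, one_mul, Finset.sum_range_add, ih, succ_nsmul]
      congr 1
      refine Finset.sum_congr rfl fun i _ => ?_
      rw [add_comm (e * d) i, pow_add, Module.End.mul_apply, pow_mul_fix P v d hd]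

end Tensor

section Orb
variable [NeZero N]

/-- The orbit of a finset under all shifts. -/
def orb (S : Finset (ZMod N)) : Finset (Finset (ZMod N)) :=
  Finset.image (fun g : ZMod N => shf g S) Finset.univ

lemma mem_orb {S T : Finset (ZMod N)} : T ∈ orb S ↔ ∃ g : ZMod N, shf g S = T := by
  simp [orb]

lemma self_mem_orb (S : Finset (ZMod N)) : S ∈ orb S :=
  mem_orb.2 ⟨0, shf_zero S⟩

lemma orb_shf (g : ZMod N) (S : Finset (ZMod N)) : orb (shf g S) = orb S := by
  ext T
  simp only [mem_orb]
  constructor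
  · rintro ⟨h, rfl⟩
    exact ⟨h + g, shf_add h g S⟩
  · rintro ⟨h, rfl⟩
    exact ⟨h - g, by rw [← shf_add]; congr 1; ring⟩

end Orb

section Expand
variable [NeZero N]
variable {R : Type*} [CommRing R] {M : Type*} [AddCommGroup M] [Module R M]

lemma expand (p : ℕ) (b c : M) :
    tprod R (fun _ : ZMod N => b + (p : R) • c)
      = ∑ S : Finset (ZMod N), (p : R) ^ S.card • tS R b c S := by
  classical
  have hfun : (fun _ : ZMod N => b + (p : R) • c)
      = (fun _ : ZMod N => (p : R) • c) + (fun _ : ZMod N => b) := by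
    funext i; simp [add_comm]
  rw [hfun, MultilinearMap.map_add_univ]
  refine Finset.sum_congr rfl fun S _ => ?_
  have hpw : S.piecewise (fun _ : ZMod N => (p : R) • c) (fun _ : ZMod N => b)
      = S.piecewise (fun i : ZMod N => (p : R) • (fun j : ZMod N => if j ∈ S then c else b) i)
          (fun j : ZMod N => if j ∈ S then c else b) := by
    funext i; by_cases h : i ∈ S <;> simp [Finset.piecewise, h]
  rw [hpw, MultilinearMap.map_piecewise_smul]
  simp [tS]

end Expand

section Key
variable [NeZero N]
variable {R : Type*} [CommRing R] {M : Type*} [AddCommGroup M] [Module R M]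

theorem key (p m : ℕ) (hp : p.Prime) (hN : N = p ^ m) (b c : M)
    (P : (⨂[R] _ : ZMod N, M) →ₗ[R] ⨂[R] _ : ZMod N, M)
    (hP : P = (PiTensorProduct.reindex R (fun _ : ZMod N => M)
      (Equiv.addLeft (1 : ZMod N))).toLinearMap) :
    ∃ u : ⨂[R] _ : ZMod N, M,
      tprod R (fun _ : ZMod N => b + (p : R) • c) - tprod R (fun _ : ZMod N => b)
        = ∑ j ∈ Finset.range N, (P ^ j) ((p : R) • u) := by
  classical
  set f : Finset (ZMod N) → (⨂[R] _ : ZMod N, M) :=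
    fun S => (p : R) ^ S.card • tS R b c S with hf
  set s : Finset (Finset (ZMod N)) :=
    Finset.univ.filter (fun S : Finset (ZMod N) => S.Nonempty) with hs
  -- Step 1: expansion and removal of the empty set term
  have hsplit : tprod R (fun _ : ZMod N => b + (p : R) • c) - tprod R (fun _ : ZMod N => b)
      = ∑ S ∈ s, f S := by
    rw [expand p b c,
      ← Finset.sum_filter_add_sum_filter_not Finset.univ
        (fun S : Finset (ZMod N) => S.Nonempty) f]
    have hempty : Finset.univ.filter (fun S : Finset (ZMod N) => ¬ S.Nonempty) = {∅} := by
      ext S; simp [Finset.not_nonempty_iff_eq_empty]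
    rw [hempty, Finset.sum_singleton]
    have hfe : f ∅ = tprod R (fun _ : ZMod N => b) := by simp [hf, tS]
    rw [hfe, add_sub_cancel_right]
  -- Step 2: fiberwise decomposition over orbits
  set t : Finset (Finset (Finset (ZMod N))) := s.image orb with ht
  have hmaps : ∀ S ∈ s, orb S ∈ t := fun S hS => Finset.mem_image_of_mem _ hS
  have hfibers := Finset.sum_fiberwise_of_maps_to hmaps f
  -- Step 3: each fiber is a trace of something divisible by p
  have hfib : ∀ y ∈ t, ∃ w : ⨂[R] _ : ZMod N, M,
      (∑ S ∈ s.filter (fun S => orb S = y), f S)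
        = ∑ j ∈ Finset.range N, (P ^ j) ((p : R) • w) := by
    intro y hy
    obtain ⟨S₀, hS₀s, rfl⟩ := Finset.mem_image.1 hy
    have hS₀ : S₀.Nonempty := (Finset.mem_filter.1 hS₀s).2
    set d := per S₀ with hd
    -- the fiber is exactly the orbit of S₀
    have hfe : s.filter (fun S => orb S = orb S₀) = orb S₀ := by
      ext T
      simp only [Finset.mem_filter, hs, Finset.mem_univ, true_and]
      constructor
      · rintro ⟨_, hT⟩
        rw [← hT]; exact self_mem_orb T
      · intro hT
        obtain ⟨g, rfl⟩ := mem_orb.1 hT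
        exact ⟨shf_nonempty hS₀, orb_shf g S₀⟩
    rw [hfe]
    -- the orbit sum as a sum over range d
    have horb : ∑ T ∈ orb S₀, f T
        = ∑ j ∈ Finset.range d, (p : R) ^ S₀.card • (P ^ j) (tS R b c S₀) := by
      refine (Finset.sum_bij
        (fun (j : ℕ) (_ : j ∈ Finset.range d) => shf (j : ZMod N) S₀) ?_ ?_ ?_ ?_).symm
      · intro j _
        exact mem_orb.2 ⟨(j : ZMod N), rfl⟩
      · intro j hj j' hj' hjj'
        simp only [Finset.mem_range] at hj hj'
        have h2 : shf ((j : ℕ) : ZMod N) S₀ = shf ((j' : ℕ) : ZMod N) S₀ := hjj'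
        -- reduce to divisibility by the period
        rcases le_total j' j with hle | hle
        · have h3 := congrArg (shf (-((j' : ℕ) : ZMod N))) h2
          rw [← shf_add, ← shf_add] at h3
          have e1 : -((j' : ℕ) : ZMod N) + (j : ℕ) = ((j - j' : ℕ) : ZMod N) := by
            rw [Nat.cast_sub hle]; ring
          have e2 : -((j' : ℕ) : ZMod N) + (j' : ℕ) = (0 : ZMod N) := by ring
          rw [e1, e2, shf_zero] at h3
          have hdvd := (per_dvd_iff S₀ (j - j')).1 h3
          have h0 : j - j' = 0 := Nat.eq_zero_of_dvd_of_lt hdvd (by omega)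
          omega
        · have h3 := congrArg (shf (-((j : ℕ) : ZMod N))) h2.symm
          rw [← shf_add, ← shf_add] at h3
          have e1 : -((j : ℕ) : ZMod N) + (j' : ℕ) = ((j' - j : ℕ) : ZMod N) := by
            rw [Nat.cast_sub hle]; ring
          have e2 : -((j : ℕ) : ZMod N) + (j : ℕ) = (0 : ZMod N) := by ring
          rw [e1, e2, shf_zero] at h3
          have hdvd := (per_dvd_iff S₀ (j' - j)).1 h3
          have h0 : j' - j = 0 := Nat.eq_zero_of_dvd_of_lt hdvd (by omega)
          omega
      · intro T hT
        obtain ⟨g, rfl⟩ := mem_orb.1 hT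
        refine ⟨g.val % d, Finset.mem_range.2 (Nat.mod_lt _ (per_pos S₀)), ?_⟩
        have hdecomp : g.val = g.val % d + (g.val / d) * d := by
          rw [Nat.mod_add_div']
        have h1 : shf ((g.val : ℕ) : ZMod N) S₀ = shf ((g.val % d : ℕ) : ZMod N) S₀ := by
          conv_lhs => rw [hdecomp]
          rw [Nat.cast_add, shf_add, shf_mul_per]
        show shf ((g.val % d : ℕ) : ZMod N) S₀ = shf g S₀
        rw [← h1, ZMod.natCast_val, ZMod.cast_id]
      · intro j hj
        simp only [hf, card_shf, pow_tS P hP]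
    rw [horb]
    -- orbit size and cardinality estimates
    have hdvdN : per S₀ ∣ p ^ m := by rw [← hN]; exact per_dvd S₀
    obtain ⟨v, hvm, hdv⟩ := (Nat.dvd_prime_pow hp).1 hdvdN
    have hNd : N = p ^ (m - v) * d := by
      rw [hN, hd, hdv, ← pow_add]
      congr 1
      omega
    have hcard : m - v + 1 ≤ S₀.card := by
      have h1 : N / d = p ^ (m - v) := by
        rw [hNd, Nat.mul_div_cancel _ (per_pos S₀)]
      have h2 := card_ge S₀ hS₀
      rw [h1] at h2
      have h3 : m - v < p ^ (m - v) := Nat.lt_pow_self hp.one_lt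
      omega
    -- the full trace of `tS S₀` as a multiple of the orbit sum
    have hfix : (P ^ d) (tS R b c S₀) = tS R b c S₀ := by
      rw [pow_tS P hP, hd, shf_per]
    have hNsum : ∑ j ∈ Finset.range N, (P ^ j) (tS R b c S₀)
        = p ^ (m - v) • ∑ j ∈ Finset.range d, (P ^ j) (tS R b c S₀) := by
      have h2 := sum_pow_mul P (tS R b c S₀) d (p ^ (m - v)) hfix
      rwa [← hNd] at h2
    refine ⟨(p : R) ^ (S₀.card - (m - v) - 1) • tS R b c S₀, ?_⟩
    have hrhs : ∀ j : ℕ, (P ^ j) ((p : R) • (p : R) ^ (S₀.card - (m - v) - 1) • tS R b c S₀)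
        = (p : R) ^ (S₀.card - (m - v)) • (P ^ j) (tS R b c S₀) := by
      intro j
      rw [map_smul, map_smul, smul_smul, ← pow_succ']
      congr 2
      omega
    calc ∑ j ∈ Finset.range d, (p : R) ^ S₀.card • (P ^ j) (tS R b c S₀)
        = (p : R) ^ S₀.card • ∑ j ∈ Finset.range d, (P ^ j) (tS R b c S₀) := by
          rw [Finset.smul_sum]
      _ = (p : R) ^ (S₀.card - (m - v)) • (p : R) ^ (m - v)
            • ∑ j ∈ Finset.range d, (P ^ j) (tS R b c S₀) := by
          rw [smul_smul, ← pow_add]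
          congr 2
          omega
      _ = (p : R) ^ (S₀.card - (m - v)) • ∑ j ∈ Finset.range N, (P ^ j) (tS R b c S₀) := by
          rw [hNsum, ← Nat.cast_smul_eq_nsmul R]
          push_cast
          rfl
      _ = ∑ j ∈ Finset.range N, (P ^ j) ((p : R) • (p : R) ^ (S₀.card - (m - v) - 1)
            • tS R b c S₀) := by
          rw [Finset.smul_sum]
          exact Finset.sum_congr rfl fun j _ => (hrhs j).symm
  -- Step 4: assemble everything with a choice of `w` for each fiber
  choose w hw using hfib
  refine ⟨∑ y ∈ t.attach, w y y.2, ?_⟩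
  rw [hsplit, ← hfibers, ← Finset.sum_attach t (fun y => ∑ S ∈ s.filter (fun S => orb S = y), f S)]
  calc ∑ y ∈ t.attach, ∑ S ∈ s.filter (fun S => orb S = y.1), f S
      = ∑ y ∈ t.attach, ∑ j ∈ Finset.range N, (P ^ j) ((p : R) • w y y.2) :=
        Finset.sum_congr rfl fun y _ => hw y y.2
    _ = ∑ j ∈ Finset.range N, ∑ y ∈ t.attach, (P ^ j) ((p : R) • w y y.2) :=
        Finset.sum_comm
    _ = ∑ j ∈ Finset.range N, (P ^ j) ((p : R) • ∑ y ∈ t.attach, w y y.2) := by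
        refine Finset.sum_congr rfl fun j _ => ?_
        rw [Finset.smul_sum, map_sum]

lemma pow_N_eq_id (P : (⨂[R] _ : ZMod N, M) →ₗ[R] ⨂[R] _ : ZMod N, M)
    (hP : P = (PiTensorProduct.reindex R (fun _ : ZMod N => M)
      (Equiv.addLeft (1 : ZMod N))).toLinearMap) :
    P ^ N = LinearMap.id := by
  refine PiTensorProduct.ext (MultilinearMap.ext fun f => ?_)
  simp only [LinearMap.compMultilinearMap_apply, LinearMap.id_coe, id_eq]
  rw [pow_tprod P hP]
  congr 1
  funext i
  simp [ZMod.natCast_self]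

end Key
end Stmt10Aux


/-- Let `k` be a perfect field of characteristic `p`, `n ≥ m ≥ 1`, `E` a free module over
`W_n(k)`, and let the cyclic group `G_m = Z/p^mZ` act on `E^{⊗p^m}` by cyclic permutation of
the factors (the generator `P` acting by reindexing along `x ↦ x + 1` on `ZMod (p^m)`), with
`G_{m+1}` acting through the quotient `G_{m+1} → G_m`. If `a ≡ b (mod p)` in `E`, then the
classes of `a^{⊗p^m}` and `b^{⊗p^m}` agree in `Ȟ⁰(G_{m+1}, E^{⊗p^m})` and in
`Ȟ⁰(G_m, E^{⊗p^m})`, i.e. their difference lies in the image of the corresponding trace map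
`∑_j P^j` (over `p^{m+1}` resp. `p^m` group elements). -/
theorem stmt_10 (p : ℕ) [Fact p.Prime] (k : Type*) [Field k] [CharP k p] [PerfectRing k p]
    (m n : ℕ) (hm : 1 ≤ m) (hmn : m ≤ n)
    (E : Type*) [AddCommGroup E] [Module (TruncatedWittVector p n k) E]
    [Module.Free (TruncatedWittVector p n k) E]
    (a b : E) (hab : ∃ c : E, a = b + (p : TruncatedWittVector p n k) • c)
    (P : (⨂[TruncatedWittVector p n k] _ : ZMod (p ^ m), E) →ₗ[TruncatedWittVector p n k]
        ⨂[TruncatedWittVector p n k] _ : ZMod (p ^ m), E)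
    (hP : P = (PiTensorProduct.reindex (TruncatedWittVector p n k)
        (fun _ : ZMod (p ^ m) => E) (Equiv.addLeft (1 : ZMod (p ^ m)))).toLinearMap) :
    (∃ v : ⨂[TruncatedWittVector p n k] _ : ZMod (p ^ m), E,
        (PiTensorProduct.tprod (TruncatedWittVector p n k) fun _ : ZMod (p ^ m) => a)
            - PiTensorProduct.tprod (TruncatedWittVector p n k) (fun _ : ZMod (p ^ m) => b)
          = ∑ j ∈ Finset.range (p ^ (m + 1)), (P ^ j) v)
    ∧ (∃ v : ⨂[TruncatedWittVector p n k] _ : ZMod (p ^ m), E,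
        (PiTensorProduct.tprod (TruncatedWittVector p n k) fun _ : ZMod (p ^ m) => a)
            - PiTensorProduct.tprod (TruncatedWittVector p n k) (fun _ : ZMod (p ^ m) => b)
          = ∑ j ∈ Finset.range (p ^ m), (P ^ j) v) := by
  have hp : p.Prime := Fact.out
  haveI : NeZero (p ^ m) := ⟨(pow_pos hp.pos m).ne'⟩
  set R := TruncatedWittVector p n k
  obtain ⟨c, rfl⟩ := hab
  obtain ⟨u, hu⟩ := Stmt10Aux.key (N := p ^ m) p m hp rfl b c P hP
  have hid : P ^ (p ^ m) = LinearMap.id := Stmt10Aux.pow_N_eq_id P hP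
  have h1 : ∑ j ∈ Finset.range (p ^ (m + 1)), (P ^ j) u
      = p • ∑ j ∈ Finset.range (p ^ m), (P ^ j) u := by
    have h := Stmt10Aux.sum_pow_mul P u (p ^ m) p (by rw [hid]; rfl)
    rwa [← pow_succ'] at h
  have h2 : ∑ j ∈ Finset.range (p ^ m), (P ^ j) ((p : R) • u)
      = p • ∑ j ∈ Finset.range (p ^ m), (P ^ j) u := by
    rw [← Nat.cast_smul_eq_nsmul R, Finset.smul_sum]
    exact Finset.sum_congr rfl fun j _ => map_smul _ _ _
  constructor
  · exact ⟨u, by rw [hu, h2, h1]⟩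
  · exact ⟨(p : R) • u, hu⟩
end

section
/- Let p be a prime and M = Z[s₀, s₁] the free abelian group on two generators. For each n ≥ 1 let σ denote the cyclic permutation of order p^n acting on M^{⊗p^n}. Then there exist elements c_i ∈ M^{⊗p^i} for i ≥ 1 such that for every n ≥ 1: (s₀+s₁)^{⊗p^n} = s₀^{⊗p^n} + s₁^{⊗p^n} + Σ_{i=1}^{n} Σ_{j=0}^{p^i − 1} σ^j(c_i^{⊗p^{n−i}}) in M^{⊗p^n}. -/
/-- Words of length `N` in the two letters `s₀, s₁`, i.e. the canonical basis of the `p^·`-fold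
tensor power `M^{⊗N}` of the free abelian group `M = Z[s₀,s₁]`; elements of `M^{⊗N}` are
represented as formal `ℤ`-linear combinations of words. -/
abbrev tensorPowerOfRankTwo (N : ℕ) : Type := (ZMod N → Fin 2) →₀ ℤ

/-- The cyclic rotation `σ^j` of the tensor factors of `M^{⊗p^n}`, in the word model:
the linear extension of rotating each word by `j`. -/
noncomputable def cyclicRotate (N : ℕ) (j : ℕ) :
    tensorPowerOfRankTwo N → tensorPowerOfRankTwo N :=
  Finsupp.mapDomain fun w : ZMod N → Fin 2 => fun x => w (x + (j : ZMod N))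

/-- The `p^{n-i}`-fold tensor power map `M^{⊗p^i} → (M^{⊗p^i})^{⊗p^{n-i}} = M^{⊗p^n}`,
`c ↦ c^{⊗p^{n−i}}`, in the word model: blocks of length `p^i` are concatenated, block `l`
of the word being the word at position `l` of the chosen tuple, and coefficients multiply. -/
noncomputable def tensorPow (p i n : ℕ) [NeZero (p ^ i)] [NeZero (p ^ (n - i))]
    (c : tensorPowerOfRankTwo (p ^ i)) : tensorPowerOfRankTwo (p ^ n) :=
  ∑ g : ZMod (p ^ (n - i)) → (ZMod (p ^ i) → Fin 2),
    (∏ j : ZMod (p ^ (n - i)), c (g j)) •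
      Finsupp.single
        (fun x : ZMod (p ^ n) =>
          g (((x.val / p ^ i : ℕ) : ZMod (p ^ (n - i)))) (((x.val : ℕ) : ZMod (p ^ i))))
        (1 : ℤ)

namespace S12
variable (p : ℕ) [∀ j : ℕ, NeZero (p ^ j)]

abbrev Wd (n : ℕ) : Type := ZMod (p ^ n) → Fin 2

def const (n : ℕ) (b : Fin 2) : Wd p n := fun _ => b

def rotZ (n : ℕ) (s : ZMod (p ^ n)) (w : Wd p n) : Wd p n := fun x => w (x - s)

def rotN (n j : ℕ) (w : Wd p n) : Wd p n := rotZ p n (j : ZMod (p ^ n)) w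

def blk (i n : ℕ) (u : Wd p n) (l : ZMod (p ^ (n - i))) : Wd p i :=
  fun m => u ((l.val * p ^ i + m.val : ℕ))

def emb (k n : ℕ) (v : Wd p k) : Wd p n := fun x => v ((x.val : ℕ))

def res (n k : ℕ) (w : Wd p n) : Wd p k := fun y => w ((y.val : ℕ))

noncomputable def prodC (i n : ℕ) (ci : tensorPowerOfRankTwo (p ^ i)) (u : Wd p n) : ℤ :=
  ∏ l : ZMod (p ^ (n - i)), ci (blk p i n u l)

noncomputable def aC (i n : ℕ) (ci : tensorPowerOfRankTwo (p ^ i)) (j : ℕ) (u : Wd p n) : ℤ :=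
  prodC p i n ci (rotN p n j u)

noncomputable def tC (i n : ℕ) (ci : tensorPowerOfRankTwo (p ^ i)) (u : Wd p n) : ℤ :=
  ∑ j ∈ Finset.range (p ^ i), aC p i n ci j u

def Per (n d : ℕ) (w : Wd p n) : Prop := ∀ x, w (x + (d : ZMod (p ^ n))) = w x

noncomputable def Dval (c : ∀ i, tensorPowerOfRankTwo (p ^ i)) (n : ℕ) (w : Wd p n) : ℤ :=
  1 - (if w = const p n 0 then 1 else 0) - (if w = const p n 1 then 1 else 0)
    - ∑ i ∈ Finset.Icc 1 (n - 1), tC p i n (c i) w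

end S12

namespace S12
variable (p : ℕ) [∀ j : ℕ, NeZero (p ^ j)]

lemma cyclicRotate_apply (n j : ℕ) (X : tensorPowerOfRankTwo (p ^ n)) (u : Wd p n) :
    cyclicRotate (p ^ n) j X u = X (rotN p n j u) := by
  have hinj : Function.Injective (fun w : Wd p n => fun x => w (x + (j : ZMod (p ^ n)))) := by
    intro w w' h
    funext x
    have := congrFun h (x - (j : ZMod (p ^ n)))
    simpa using this
  have h2 : u = (fun w : Wd p n => fun x => w (x + (j : ZMod (p ^ n)))) (rotN p n j u) := by
    funext x; simp [rotN, rotZ]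
  rw [cyclicRotate]
  conv_lhs => rw [h2]
  exact Finsupp.mapDomain_apply hinj X (rotN p n j u)

lemma pos_pow (i : ℕ) : 0 < p ^ i := Nat.pos_of_ne_zero (NeZero.ne _)

lemma blk_word (i n : ℕ) (hin : i ≤ n) (u : Wd p n) :
    (fun x : ZMod (p ^ n) =>
        blk p i n u (((x.val / p ^ i : ℕ) : ZMod (p ^ (n - i)))) (((x.val : ℕ) : ZMod (p ^ i))))
      = u := by
  funext x
  rw [blk]
  have hx : x.val < p ^ n := ZMod.val_lt x
  have hxn : x.val < p ^ (n - i) * p ^ i := by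
    rw [← pow_add]
    have : n - i + i = n := by omega
    rw [this]; exact hx
  have hdiv : x.val / p ^ i < p ^ (n - i) := Nat.div_lt_of_lt_mul (by rw [mul_comm] at hxn; exact hxn)
  have h1 : (((x.val / p ^ i : ℕ) : ZMod (p ^ (n - i)))).val = x.val / p ^ i :=
    ZMod.val_natCast_of_lt hdiv
  have h2 : (((x.val : ℕ) : ZMod (p ^ i))).val = x.val % p ^ i := ZMod.val_natCast _ _
  rw [h1, h2]
  have : x.val / p ^ i * p ^ i + x.val % p ^ i = x.val := Nat.div_add_mod' _ _
  rw [this, ZMod.natCast_val, ZMod.cast_id]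

lemma word_inj (i n : ℕ) (hin : i ≤ n) :
    Function.Injective (fun g : ZMod (p ^ (n - i)) → (ZMod (p ^ i) → Fin 2) =>
      (fun x : ZMod (p ^ n) =>
        g (((x.val / p ^ i : ℕ) : ZMod (p ^ (n - i)))) (((x.val : ℕ) : ZMod (p ^ i))))) := by
  intro g g' h
  funext l m
  have hx : (l.val * p ^ i + m.val : ℕ) < p ^ n := by
    have h1 : l.val < p ^ (n - i) := ZMod.val_lt l
    have h2 : m.val < p ^ i := ZMod.val_lt m
    calc l.val * p ^ i + m.val < (l.val + 1) * p ^ i := by rw [add_mul, one_mul]; omega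
      _ ≤ p ^ (n - i) * p ^ i := Nat.mul_le_mul_right _ (by omega)
      _ = p ^ n := by rw [← pow_add]; congr 1; omega
  have := congrFun h ((l.val * p ^ i + m.val : ℕ) : ZMod (p ^ n))
  simp only at this
  have hval : (((l.val * p ^ i + m.val : ℕ) : ZMod (p ^ n))).val
      = l.val * p ^ i + m.val := ZMod.val_natCast_of_lt hx
  rw [hval] at this
  have hdiv : (l.val * p ^ i + m.val) / p ^ i = l.val := by
    rw [mul_comm, Nat.mul_add_div (pos_pow p i), Nat.div_eq_of_lt (ZMod.val_lt m), add_zero]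
  have hmod : ((l.val * p ^ i + m.val : ℕ) : ZMod (p ^ i)) = (m.val : ZMod (p ^ i)) := by
    rw [Nat.cast_add, Nat.cast_mul, ZMod.natCast_self, mul_zero, zero_add]
  rw [hdiv, hmod] at this
  simpa [ZMod.natCast_val, ZMod.cast_id] using this

lemma tensorPow_apply (i n : ℕ) (hin : i ≤ n) (c : tensorPowerOfRankTwo (p ^ i))
    (u : Wd p n) : tensorPow p i n c u = prodC p i n c u := by
  classical
  rw [tensorPow]
  rw [Finsupp.finset_sum_apply]
  simp only [Finsupp.smul_apply, Finsupp.single_apply, smul_eq_mul]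
  rw [Finset.sum_eq_single (fun l => blk p i n u l)]
  · rw [if_pos (blk_word p i n hin u), mul_one, prodC]
  · intro g _ hg
    rw [if_neg, mul_zero]
    intro h
    exact hg (word_inj p i n hin (h.trans (blk_word p i n hin u).symm))
  · intro h
    exact absurd (Finset.mem_univ _) h

lemma sumAll_apply (n : ℕ) (u : Wd p n) :
    (∑ w : Wd p n, Finsupp.single w (1 : ℤ)) u = 1 := by
  classical
  rw [Finsupp.finset_sum_apply]
  simp [Finsupp.single_apply]

end S12
namespace S12
variable (p : ℕ) [∀ j : ℕ, NeZero (p ^ j)]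

def pi' (n k : ℕ) (x : ZMod (p ^ n)) : ZMod (p ^ k) := ((x.val : ℕ) : ZMod (p ^ k))

lemma pi'_eq_castHom (n k : ℕ) (hkn : k ≤ n) (x : ZMod (p ^ n)) :
    pi' p n k x = ZMod.castHom (pow_dvd_pow p hkn) (ZMod (p ^ k)) x := by
  rw [pi', ZMod.natCast_val, ZMod.castHom_apply]

lemma pi'_sub (n k : ℕ) (hkn : k ≤ n) (x y : ZMod (p ^ n)) :
    pi' p n k (x - y) = pi' p n k x - pi' p n k y := by
  simp only [pi'_eq_castHom p n k hkn, map_sub]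

lemma pi'_natCast (n k : ℕ) (hkn : k ≤ n) (j : ℕ) :
    pi' p n k ((j : ℕ) : ZMod (p ^ n)) = (j : ZMod (p ^ k)) := by
  rw [pi'_eq_castHom p n k hkn, map_natCast]

lemma emb_apply (k n : ℕ) (v : Wd p k) (x : ZMod (p ^ n)) :
    emb p k n v x = v (pi' p n k x) := rfl

lemma natCast_pow_mod (k m : ℕ) (hkm : k ≤ m) (a : ℕ) :
    ((a % p ^ m : ℕ) : ZMod (p ^ k)) = (a : ZMod (p ^ k)) := by
  conv_rhs => rw [← Nat.div_add_mod a (p ^ m)]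
  rw [Nat.cast_add, Nat.cast_mul, Nat.cast_pow]
  have : ((p : ZMod (p ^ k)) ^ m) = 0 := by
    rw [← Nat.cast_pow, ZMod.natCast_eq_zero_iff]
    exact pow_dvd_pow p hkm
  rw [this, zero_mul, zero_add]

lemma pi'_pi' (n m k : ℕ) (hkm : k ≤ m) (x : ZMod (p ^ n)) :
    pi' p m k (pi' p n m x) = pi' p n k x := by
  rw [pi', pi', pi', ZMod.val_natCast, natCast_pow_mod p k m hkm]

lemma emb_comp (k m n : ℕ) (hkm : k ≤ m) (v : Wd p k) :
    emb p m n (emb p k m v) = emb p k n v := by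
  funext x
  rw [emb_apply, emb_apply, emb_apply, pi'_pi' p n m k hkm]

lemma rot_emb (k n : ℕ) (hkn : k ≤ n) (j : ℕ) (v : Wd p k) :
    rotN p n j (emb p k n v) = emb p k n (rotN p k j v) := by
  funext x
  rw [rotN, rotZ, emb_apply, emb_apply, rotN, rotZ,
    pi'_sub p n k hkn, pi'_natCast p n k hkn]

lemma rotN_add_period (k j : ℕ) (v : Wd p k) :
    rotN p k (j + p ^ k) v = rotN p k j v := by
  funext x
  rw [rotN, rotZ, rotN, rotZ]
  congr 1
  push_cast
  rw [← Nat.cast_pow, ZMod.natCast_self]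
  ring

lemma p_pos : 0 < p := Nat.pos_of_ne_zero (fun h => (NeZero.ne (p ^ 1)) (by simp [h]))

lemma emb_inj (k n : ℕ) (hkn : k ≤ n) : Function.Injective (emb p k n) := by
  intro v v' h
  funext y
  have := congrFun h ((y.val : ℕ) : ZMod (p ^ n))
  rw [emb_apply, emb_apply, pi'] at this
  have hy : y.val < p ^ n := lt_of_lt_of_le (ZMod.val_lt y) (Nat.pow_le_pow_right (p_pos p) hkn)
  rw [ZMod.val_natCast_of_lt hy] at this
  simpa [ZMod.natCast_val, ZMod.cast_id] using this

lemma emb_const (k n : ℕ) (b : Fin 2) : emb p k n (const p k b) = const p n b := rfl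

lemma emb_eq_const_iff (k n : ℕ) (hkn : k ≤ n) (v : Wd p k) (b : Fin 2) :
    emb p k n v = const p n b ↔ v = const p k b := by
  constructor
  · intro h; exact emb_inj p k n hkn (by rw [h, emb_const])
  · intro h; rw [h, emb_const]

lemma per_iterate (n d : ℕ) (w : Wd p n) (h : Per p n d w) (y : ZMod (p ^ n)) (t : ℕ) :
    w (y + ((d * t : ℕ) : ZMod (p ^ n))) = w y := by
  induction t with
  | zero => simp
  | succ t ih =>
      have : ((d * (t + 1) : ℕ) : ZMod (p ^ n)) = ((d * t : ℕ) : ZMod (p ^ n)) + (d : ZMod (p ^ n)) := by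
        push_cast; ring
      rw [this, ← add_assoc]
      rw [h (y + ((d * t : ℕ) : ZMod (p ^ n)))] at *
      exact ih

lemma emb_res (n k : ℕ) (hkn : k ≤ n) (w : Wd p n) (h : Per p n (p ^ k) w) :
    emb p k n (res p n k w) = w := by
  funext x
  rw [emb_apply, res, pi', ZMod.val_natCast]
  have : x = (((x.val % p ^ k : ℕ) : ZMod (p ^ n)) + ((p ^ k * (x.val / p ^ k) : ℕ) : ZMod (p ^ n))) := by
    rw [← Nat.cast_add, Nat.mod_add_div, ZMod.natCast_val, ZMod.cast_id]
  conv_rhs => rw [this]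
  rw [per_iterate p n (p ^ k) w h]

lemma per_emb (k n : ℕ) (hkn : k ≤ n) (v : Wd p k) : Per p n (p ^ k) (emb p k n v) := by
  intro x
  rw [emb_apply, emb_apply]
  congr 1
  have : pi' p n k (x + ((p ^ k : ℕ) : ZMod (p ^ n))) = pi' p n k x + ((p ^ k : ℕ) : ZMod (p ^ k)) := by
    rw [pi'_eq_castHom p n k hkn, pi'_eq_castHom p n k hkn, map_add, map_natCast]
  rw [this, ZMod.natCast_self, add_zero]

lemma per_mono (n k k' : ℕ) (hkk' : k ≤ k') (w : Wd p n) (h : Per p n (p ^ k) w) :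
    Per p n (p ^ k') w := by
  intro x
  have : (p ^ k' : ℕ) = p ^ k * p ^ (k' - k) := by rw [← pow_add]; congr 1; omega
  rw [this]
  exact per_iterate p n (p ^ k) w h x _

end S12
namespace S12
variable (p : ℕ) [∀ j : ℕ, NeZero (p ^ j)]

lemma mul_pow_cast (i n : ℕ) (hin : i ≤ n) (x : ℕ) :
    (((x % p ^ (n - i)) * p ^ i : ℕ) : ZMod (p ^ n)) = ((x * p ^ i : ℕ) : ZMod (p ^ n)) := by
  have hp : (p ^ (n - i) * p ^ i : ℕ) = p ^ n := by rw [← pow_add]; congr 1; omega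
  have hx : x * p ^ i = p ^ n * (x / p ^ (n - i)) + (x % p ^ (n - i)) * p ^ i := by
    conv_lhs => rw [← Nat.div_add_mod x (p ^ (n - i))]
    rw [← hp]; ring
  rw [hx, Nat.cast_add, Nat.cast_mul (p ^ n), ZMod.natCast_self, zero_mul, zero_add]

lemma psi_add (i n : ℕ) (hin : i ≤ n) (a b : ZMod (p ^ (n - i))) :
    (((a + b).val * p ^ i : ℕ) : ZMod (p ^ n))
      = ((a.val * p ^ i : ℕ) : ZMod (p ^ n)) + ((b.val * p ^ i : ℕ) : ZMod (p ^ n)) := by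
  rw [ZMod.val_add, mul_pow_cast p i n hin]
  push_cast
  ring

lemma blk_emb (i m : ℕ) (him : i ≤ m) (u : Wd p m) (l : ZMod (p ^ (m + 1 - i))) :
    blk p i (m + 1) (emb p m (m + 1) u) l = blk p i m u ((l.val : ℕ) : ZMod (p ^ (m - i))) := by
  funext m'
  rw [blk, blk, emb_apply, pi'_natCast p (m + 1) m (by omega)]
  congr 1
  rw [ZMod.val_natCast]
  conv_rhs => rw [Nat.cast_add]
  conv_lhs => rw [Nat.cast_add]
  rw [mul_pow_cast p i m him]

lemma fiber_card (r s : ℕ) (hrs : r ≤ s) (b : ZMod (p ^ r)) :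
    (Finset.univ.filter (fun l : ZMod (p ^ s) => ((l.val : ℕ) : ZMod (p ^ r)) = b)).card
      = p ^ (s - r) := by
  classical
  have key : Finset.univ.filter (fun l : ZMod (p ^ s) => ((l.val : ℕ) : ZMod (p ^ r)) = b)
      = (Finset.range (p ^ (s - r))).image
          (fun t => ((b.val + p ^ r * t : ℕ) : ZMod (p ^ s))) := by
    ext l
    simp only [Finset.mem_filter, Finset.mem_univ, true_and, Finset.mem_image,
      Finset.mem_range]
    constructor
    · intro h
      refine ⟨l.val / p ^ r, ?_, ?_⟩
      · have : l.val < p ^ r * p ^ (s - r) := by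
          rw [← pow_add]
          have h2 : r + (s - r) = s := by omega
          rw [h2]; exact ZMod.val_lt l
        exact Nat.div_lt_of_lt_mul this
      · have hb : b.val = l.val % p ^ r := by
          rw [← h, ZMod.val_natCast]
        rw [hb, Nat.mod_add_div, ZMod.natCast_val, ZMod.cast_id]
    · rintro ⟨t, ht, rfl⟩
      have hlt : b.val + p ^ r * t < p ^ s := by
        have hbv : b.val < p ^ r := ZMod.val_lt b
        have : b.val + p ^ r * t < p ^ r * (t + 1) := by ring_nf; omega
        calc b.val + p ^ r * t < p ^ r * (t + 1) := this
          _ ≤ p ^ r * p ^ (s - r) := Nat.mul_le_mul_left _ (by omega)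
          _ = p ^ s := by rw [← pow_add]; congr 1; omega
      rw [ZMod.val_natCast_of_lt hlt]
      rw [Nat.cast_add, Nat.cast_mul, Nat.cast_pow, ← Nat.cast_pow, ZMod.natCast_self]
      simp [ZMod.natCast_val, ZMod.cast_id]
  rw [key, Finset.card_image_of_injOn, Finset.card_range]
  intro t1 h1 t2 h2 heq
  simp only [Finset.mem_coe, Finset.mem_range] at h1 h2
  have hb : b.val < p ^ r := ZMod.val_lt b
  have l1 : b.val + p ^ r * t1 < p ^ s := by
    calc b.val + p ^ r * t1 < p ^ r * (t1 + 1) := by ring_nf; omega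
      _ ≤ p ^ r * p ^ (s - r) := Nat.mul_le_mul_left _ (by omega)
      _ = p ^ s := by rw [← pow_add]; congr 1; omega
  have l2 : b.val + p ^ r * t2 < p ^ s := by
    calc b.val + p ^ r * t2 < p ^ r * (t2 + 1) := by ring_nf; omega
      _ ≤ p ^ r * p ^ (s - r) := Nat.mul_le_mul_left _ (by omega)
      _ = p ^ s := by rw [← pow_add]; congr 1; omega
  have := congrArg ZMod.val heq
  rw [ZMod.val_natCast_of_lt l1, ZMod.val_natCast_of_lt l2] at this
  have hpr := pos_pow p r
  have h3 : p ^ r * t1 = p ^ r * t2 := by omega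
  exact Nat.eq_of_mul_eq_mul_left hpr h3

lemma prod_proj (r s : ℕ) (hrs : r ≤ s) (f : ZMod (p ^ r) → ℤ) :
    ∏ l : ZMod (p ^ s), f ((l.val : ℕ) : ZMod (p ^ r))
      = (∏ b : ZMod (p ^ r), f b) ^ (p ^ (s - r)) := by
  classical
  rw [← Finset.prod_fiberwise_of_maps_to
    (g := fun l : ZMod (p ^ s) => ((l.val : ℕ) : ZMod (p ^ r)))
    (fun x _ => Finset.mem_univ _) (fun l => f ((l.val : ℕ) : ZMod (p ^ r)))]
  rw [← Finset.prod_pow]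
  apply Finset.prod_congr rfl
  intro b _
  have : ∀ l ∈ Finset.univ.filter
      (fun l : ZMod (p ^ s) => ((l.val : ℕ) : ZMod (p ^ r)) = b),
      f ((l.val : ℕ) : ZMod (p ^ r)) = f b := by
    intro l hl
    simp only [Finset.mem_filter] at hl
    rw [hl.2]
  rw [Finset.prod_congr rfl this, Finset.prod_const, fiber_card p r s hrs b]

lemma prodC_emb_succ (i m : ℕ) (him : i ≤ m) (ci : tensorPowerOfRankTwo (p ^ i))
    (u : Wd p m) :
    prodC p i (m + 1) ci (emb p m (m + 1) u) = (prodC p i m ci u) ^ p := by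
  rw [prodC, prodC]
  have : ∀ l : ZMod (p ^ (m + 1 - i)),
      ci (blk p i (m + 1) (emb p m (m + 1) u) l)
        = (fun b => ci (blk p i m u b)) ((l.val : ℕ) : ZMod (p ^ (m - i))) := by
    intro l; rw [blk_emb p i m him u l]
  rw [Finset.prod_congr rfl (fun l _ => this l)]
  have := prod_proj p (m - i) (m + 1 - i) (by omega) (fun b => ci (blk p i m u b))
  rw [this]
  congr 1
  have : m + 1 - i - (m - i) = 1 := by omega
  rw [this, pow_one]

lemma prodC_emb (i m M : ℕ) (him : i ≤ m) (hmM : m ≤ M) (ci : tensorPowerOfRankTwo (p ^ i))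
    (v : Wd p m) :
    prodC p i M ci (emb p m M v) = (prodC p i m ci v) ^ (p ^ (M - m)) := by
  induction M, hmM using Nat.le_induction with
  | base =>
      have hemb : emb p m m v = v := by
        funext x; rw [emb_apply, pi', ZMod.natCast_val, ZMod.cast_id]
      rw [hemb]
      simp
  | succ M hmM ih =>
      rw [← emb_comp p m M (M + 1) hmM v,
        prodC_emb_succ p i M (him.trans hmM) ci (emb p m M v), ih,
        ← pow_mul, ← pow_succ]
      congr 2
      omega

end S12
namespace S12
variable (p : ℕ) [∀ j : ℕ, NeZero (p ^ j)]

lemma aC_emb (i m M : ℕ) (him : i ≤ m) (hmM : m ≤ M) (ci : tensorPowerOfRankTwo (p ^ i))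
    (j : ℕ) (v : Wd p m) :
    aC p i M ci j (emb p m M v) = (aC p i m ci j v) ^ (p ^ (M - m)) := by
  rw [aC, aC, rot_emb p m M hmM j v, prodC_emb p i m M him hmM]

lemma aC_emb_period (i n k : ℕ) (hkn : k ≤ n) (ci : tensorPowerOfRankTwo (p ^ i))
    (j : ℕ) (v : Wd p k) :
    aC p i n ci (j + p ^ k) (emb p k n v) = aC p i n ci j (emb p k n v) := by
  rw [aC, aC, rot_emb p k n hkn _ v, rotN_add_period, ← rot_emb p k n hkn j v]

lemma int_fermat (hp : p.Prime) (A : ℤ) (r : ℕ) :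
    ((p : ℤ) ^ (r + 1)) ∣ A ^ (p ^ r) - A ^ (p ^ (r + 1)) := by
  haveI : Fact p.Prime := ⟨hp⟩
  have h : (p : ℤ) ∣ A - A ^ p := by
    have h0 : ((A - A ^ p : ℤ) : ZMod p) = 0 := by
      push_cast
      rw [ZMod.pow_card]
      ring
    exact (ZMod.intCast_zmod_eq_zero_iff_dvd _ _).mp h0
  have hd := dvd_sub_pow_of_dvd_sub h r
  have h2 : (A ^ p) ^ (p ^ r) = A ^ (p ^ (r + 1)) := by
    rw [← pow_mul, ← pow_succ']
  rwa [h2] at hd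

lemma sum_window (d : ℕ) (g : ℕ → ℤ) (hper : ∀ x, g (x + d) = g x) (j : ℕ) :
    ∑ x ∈ Finset.range d, g (x + j) = ∑ x ∈ Finset.range d, g x := by
  induction j with
  | zero => simp
  | succ j ih =>
      have key : ∑ x ∈ Finset.range d, g (x + (j + 1)) = ∑ x ∈ Finset.range d, g (x + j) := by
        have h5 : ∀ x, g (x + (j + 1)) = g (x + 1 + j) := by
          intro x; congr 1; omega
        rw [Finset.sum_congr rfl (fun x _ => h5 x)]
        have h2 := Finset.sum_range_succ' (fun y => g (y + j)) d
        have h3 := Finset.sum_range_succ (fun y => g (y + j)) d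
        have h4 : g (d + j) = g (0 + j) := by
          rw [Nat.add_comm d j, hper j, Nat.zero_add]
        linarith
      rw [key, ih]

lemma sum_mul_period (d mlt : ℕ) (g : ℕ → ℤ) (hper : ∀ x, g (x + d) = g x) :
    ∑ x ∈ Finset.range (mlt * d), g x = mlt * ∑ x ∈ Finset.range d, g x := by
  induction mlt with
  | zero => simp
  | succ m ih =>
      have h1 : (m + 1) * d = m * d + d := by ring
      rw [h1, Finset.sum_range_add, ih]
      have h2 : ∀ x, g (m * d + x) = g (x + m * d) := by intro x; congr 1; omega
      rw [Finset.sum_congr rfl (fun x _ => h2 x), sum_window d g hper (m * d)]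
      push_cast
      ring

lemma rotN_comp (n j j' : ℕ) (w : Wd p n) :
    rotN p n j' (rotN p n j w) = rotN p n (j' + j) w := by
  funext x
  rw [rotN, rotN, rotN, rotZ, rotZ, rotZ]
  congr 1
  push_cast
  ring

lemma aC_shift (i n : ℕ) (hp2 : 2 ≤ p) (hin : i ≤ n) (ci : tensorPowerOfRankTwo (p ^ i))
    (j : ℕ) (w : Wd p n) :
    aC p i n ci (j + p ^ i) w = aC p i n ci j w := by
  rcases Nat.eq_or_lt_of_le hin with heq | hlt
  · subst heq
    rw [aC, aC, rotN_add_period]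
  · -- i < n
    have h1lt : 1 < p ^ (n - i) := by
      calc 1 < p := hp2
        _ = p ^ 1 := (pow_one p).symm
        _ ≤ p ^ (n - i) := Nat.pow_le_pow_right (by omega) (by omega)
    haveI : Fact (1 < p ^ (n - i)) := ⟨h1lt⟩
    rw [aC, aC, prodC, prodC]
    refine (Fintype.prod_equiv (Equiv.addRight (1 : ZMod (p ^ (n - i))))
      (fun l => ci (blk p i n (rotN p n j w) l))
      (fun l => ci (blk p i n (rotN p n (j + p ^ i) w) l)) ?_).symm
    intro l
    show ci (blk p i n (rotN p n j w) l) = ci (blk p i n (rotN p n (j + p ^ i) w) (l + 1))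
    congr 1
    funext m
    rw [blk, blk, rotN, rotZ, rotN, rotZ]
    congr 1
    have hadd := psi_add p i n hin l 1
    rw [ZMod.val_one] at hadd
    rw [Nat.cast_add, Nat.cast_add, hadd]
    push_cast
    ring

lemma tC_rot (i n : ℕ) (hp2 : 2 ≤ p) (hin : i ≤ n) (ci : tensorPowerOfRankTwo (p ^ i))
    (j : ℕ) (w : Wd p n) :
    tC p i n ci (rotN p n j w) = tC p i n ci w := by
  rw [tC, tC]
  have h1 : ∀ j', aC p i n ci j' (rotN p n j w) = aC p i n ci (j' + j) w := by
    intro j'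
    rw [aC, aC, rotN_comp]
  rw [Finset.sum_congr rfl (fun j' _ => h1 j')]
  exact sum_window (p ^ i) (fun j' => aC p i n ci j' w)
    (fun x => aC_shift p i n hp2 hin ci x w) j

lemma rot_const_iff (n j : ℕ) (w : Wd p n) (b : Fin 2) :
    rotN p n j w = const p n b ↔ w = const p n b := by
  constructor
  · intro h
    funext y
    have := congrFun h (y + (j : ZMod (p ^ n)))
    rw [rotN, rotZ] at this
    simpa [const] using this
  · intro h
    subst h
    rfl

lemma Dval_rot (c : ∀ i, tensorPowerOfRankTwo (p ^ i)) (n : ℕ) (hp2 : 2 ≤ p) (j : ℕ)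
    (w : Wd p n) : Dval p c n (rotN p n j w) = Dval p c n w := by
  rw [Dval, Dval]
  have h0 : (if rotN p n j w = const p n 0 then (1:ℤ) else 0) = (if w = const p n 0 then 1 else 0) := by
    simp [rot_const_iff]
  have h1 : (if rotN p n j w = const p n 1 then (1:ℤ) else 0) = (if w = const p n 1 then 1 else 0) := by
    simp [rot_const_iff]
  rw [h0, h1]
  congr 1
  apply Finset.sum_congr rfl
  intro i hi
  simp only [Finset.mem_Icc] at hi
  exact tC_rot p i n hp2 (by omega) (c i) j w

end S12
namespace S12
variable (p : ℕ) [∀ j : ℕ, NeZero (p ^ j)]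

instance perDecidable (n d : ℕ) (w : Wd p n) : Decidable (Per p n d w) :=
  inferInstanceAs (Decidable (∀ x, _))

lemma per_top (n : ℕ) (w : Wd p n) : Per p n (p ^ n) w := by
  intro x
  rw [ZMod.natCast_self, add_zero]

lemma exists_per (n : ℕ) (w : Wd p n) : ∃ k, Per p n (p ^ k) w := ⟨n, per_top p n w⟩

noncomputable def minPer (n : ℕ) (w : Wd p n) : ℕ := Nat.find (exists_per p n w)

lemma minPer_le (n : ℕ) (w : Wd p n) : minPer p n w ≤ n :=
  Nat.find_le (per_top p n w)

lemma minPer_spec (n : ℕ) (w : Wd p n) : Per p n (p ^ minPer p n w) w :=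
  Nat.find_spec (exists_per p n w)

lemma minPer_min (n : ℕ) (w : Wd p n) {t : ℕ} (ht : t < minPer p n w) :
    ¬ Per p n (p ^ t) w := Nat.find_min (exists_per p n w) ht

def stabSub (n : ℕ) (w : Wd p n) : AddSubgroup (ZMod (p ^ n)) where
  carrier := {s | ∀ x, w (x + s) = w x}
  zero_mem' := by intro x; rw [add_zero]
  add_mem' := by
    intro a b ha hb x
    rw [← add_assoc, hb (x + a), ha x]
  neg_mem' := by
    intro a ha x
    have := ha (x + -a)
    rw [add_assoc, neg_add_cancel, add_zero] at this
    rw [this]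

lemma per_iff_stab (n d : ℕ) (w : Wd p n) :
    Per p n d w ↔ ((d : ℕ) : ZMod (p ^ n)) ∈ stabSub p n w := Iff.rfl

lemma stab_dvd (hp : p.Prime) (n : ℕ) (w : Wd p n) (j : ℕ) (hjlt : j < p ^ n)
    (hj : ((j : ℕ) : ZMod (p ^ n)) ∈ stabSub p n w) : p ^ (minPer p n w) ∣ j := by
  set k0 := minPer p n w with hk0
  have hgcd_mem : ((Nat.gcd j (p ^ n) : ℕ) : ZMod (p ^ n)) ∈ stabSub p n w := by
    have hbez : ((Nat.gcd j (p ^ n) : ℤ)) = j * Nat.gcdA j (p ^ n) + (p ^ n : ℕ) * Nat.gcdB j (p ^ n) :=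
      Nat.gcd_eq_gcd_ab j (p ^ n)
    have hc : ((Nat.gcd j (p ^ n) : ℕ) : ZMod (p ^ n))
        = (Nat.gcdA j (p ^ n)) • (((j : ℕ) : ZMod (p ^ n))) := by
      have := congrArg (fun z : ℤ => ((z : ℤ) : ZMod (p ^ n))) hbez
      push_cast at this
      have hz : ((p : ZMod (p ^ n))) ^ n = 0 := by
        rw [← Nat.cast_pow, ZMod.natCast_self]
      rw [hz, zero_mul, add_zero] at this
      rw [this, zsmul_eq_mul]
      ring
    rw [hc]
    exact AddSubgroup.zsmul_mem _ hj _
  have hdvd : Nat.gcd j (p ^ n) ∣ p ^ n := Nat.gcd_dvd_right _ _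
  obtain ⟨t, ht, hteq⟩ := (Nat.dvd_prime_pow hp).mp hdvd
  by_cases htk : k0 ≤ t
  · calc p ^ k0 ∣ p ^ t := pow_dvd_pow p htk
      _ = Nat.gcd j (p ^ n) := hteq.symm
      _ ∣ j := Nat.gcd_dvd_left _ _
  · exfalso
    apply minPer_min p n w (show t < k0 by omega)
    rw [per_iff_stab, ← hteq]
    exact hgcd_mem

lemma stab_of_dvd (n : ℕ) (w : Wd p n) (j : ℕ) (hdvd : p ^ (minPer p n w) ∣ j) :
    ((j : ℕ) : ZMod (p ^ n)) ∈ stabSub p n w := by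
  obtain ⟨t, rfl⟩ := hdvd
  intro x
  exact per_iterate p n (p ^ (minPer p n w)) w (minPer_spec p n w) x t

instance stabDecidable (n : ℕ) (w : Wd p n) :
    DecidablePred (fun s : ZMod (p ^ n) => s ∈ stabSub p n w) := fun _ =>
  decidable_of_iff (∀ x, w (x + _) = w x) ⟨fun h => h, fun h => h⟩

lemma rotZ_eq_self_iff (n : ℕ) (s : ZMod (p ^ n)) (w : Wd p n) :
    rotZ p n s w = w ↔ s ∈ stabSub p n w := by
  constructor
  · intro h x
    have := congrFun h (x + s)
    rw [rotZ, add_sub_cancel_right] at this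
    rw [this]
  · intro h
    funext x
    have := h (x - s)
    rw [sub_add_cancel] at this
    rw [rotZ, this]

lemma card_stab (hp : p.Prime) (n : ℕ) (w : Wd p n) :
    (Finset.univ.filter (fun s : ZMod (p ^ n) => s ∈ stabSub p n w)).card
      = p ^ (n - minPer p n w) := by
  classical
  have key : Finset.univ.filter (fun s : ZMod (p ^ n) => s ∈ stabSub p n w)
      = (Finset.range (p ^ (n - minPer p n w))).image
          (fun t => ((t * p ^ (minPer p n w) : ℕ) : ZMod (p ^ n))) := by
    ext s
    simp only [Finset.mem_filter, Finset.mem_univ, true_and, Finset.mem_image,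
      Finset.mem_range]
    constructor
    · intro hs
      have hdvd : p ^ (minPer p n w) ∣ s.val := by
        apply stab_dvd p hp n w s.val (ZMod.val_lt s)
        rw [ZMod.natCast_val, ZMod.cast_id]
        exact hs
      obtain ⟨t, ht⟩ := hdvd
      refine ⟨t, ?_, ?_⟩
      · have h1 : s.val < p ^ n := ZMod.val_lt s
        have h2 : p ^ (minPer p n w) * p ^ (n - minPer p n w) = p ^ n := by
          rw [← pow_add]; congr 1; have := minPer_le p n w; omega
        by_contra hc
        push_neg at hc
        have : p ^ n ≤ p ^ (minPer p n w) * t :=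
          h2 ▸ Nat.mul_le_mul_left _ hc
        omega
      · rw [mul_comm, ← ht, ZMod.natCast_val, ZMod.cast_id]
    · rintro ⟨t, ht, rfl⟩
      exact stab_of_dvd p n w _ (Dvd.intro_left t rfl)
  rw [key, Finset.card_image_of_injOn, Finset.card_range]
  intro t1 h1 t2 h2 heq
  simp only [Finset.mem_coe, Finset.mem_range] at h1 h2
  have hk := minPer_le p n w
  have hlt : ∀ t, t < p ^ (n - minPer p n w) → t * p ^ (minPer p n w) < p ^ n := by
    intro t ht
    calc t * p ^ (minPer p n w) < p ^ (n - minPer p n w) * p ^ (minPer p n w) :=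
          (Nat.mul_lt_mul_right (pos_pow p _)).mpr ht
      _ = p ^ n := by rw [← pow_add]; congr 1; omega
  have := congrArg ZMod.val heq
  rw [ZMod.val_natCast_of_lt (hlt t1 h1), ZMod.val_natCast_of_lt (hlt t2 h2)] at this
  exact Nat.eq_of_mul_eq_mul_right (pos_pow p _) this

lemma sum_range_zmod (n : ℕ) (g : ZMod (p ^ n) → ℤ) :
    ∑ j ∈ Finset.range (p ^ n), g ((j : ℕ) : ZMod (p ^ n)) = ∑ s : ZMod (p ^ n), g s := by
  apply Finset.sum_nbij' (fun j => ((j : ℕ) : ZMod (p ^ n))) (fun s => s.val)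
  · intro j hj
    exact Finset.mem_univ _
  · intro s _
    simp only [Finset.mem_range]
    exact ZMod.val_lt s
  · intro j hj
    simp only [Finset.mem_range] at hj
    rw [ZMod.val_natCast_of_lt hj]
  · intro s _
    rw [ZMod.natCast_val, ZMod.cast_id]
  · intro j hj
    rfl

end S12
namespace S12
variable (p : ℕ) [∀ j : ℕ, NeZero (p ^ j)]

lemma per_rotZ (n d : ℕ) (s : ZMod (p ^ n)) (w : Wd p n) :
    Per p n d (rotZ p n s w) ↔ Per p n d w := by
  constructor
  · intro h x
    have h1 := h (x + s)
    rw [rotZ, rotZ] at h1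
    have e1 : x + s + (d : ZMod (p ^ n)) - s = x + d := by ring
    have e2 : x + s - s = x := by ring
    rw [e1, e2] at h1
    exact h1
  · intro h x
    rw [rotZ, rotZ]
    have e1 : x + (d : ZMod (p ^ n)) - s = x - s + d := by ring
    rw [e1, h (x - s)]

lemma minPer_rotZ (n : ℕ) (s : ZMod (p ^ n)) (w : Wd p n) :
    minPer p n (rotZ p n s w) = minPer p n w := by
  apply le_antisymm
  · exact Nat.find_le ((per_rotZ p n _ s w).mpr (minPer_spec p n w))
  · exact Nat.find_le ((per_rotZ p n _ s w).mp (minPer_spec p n (rotZ p n s w)))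

def rotSetoid (n : ℕ) : Setoid (Wd p n) where
  r := fun w w' => ∃ s, w' = rotZ p n s w
  iseqv := by
    constructor
    · intro w
      exact ⟨0, by funext x; rw [rotZ, sub_zero]⟩
    · rintro w w' ⟨s, rfl⟩
      refine ⟨-s, ?_⟩
      funext x
      rw [rotZ, rotZ, sub_neg_eq_add, add_sub_cancel_right]
    · rintro w w' w'' ⟨s, rfl⟩ ⟨s', rfl⟩
      refine ⟨s' + s, ?_⟩
      funext x
      rw [rotZ, rotZ, rotZ]
      congr 1
      ring

noncomputable def repW (n : ℕ) (w : Wd p n) : Wd p n :=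
  (@Quotient.mk _ (rotSetoid p n) w).out

lemma repW_rel (n : ℕ) (w : Wd p n) : ∃ s, repW p n w = rotZ p n s w := by
  have h : (rotSetoid p n).r (repW p n w) w := by
    apply Quotient.exact (s := rotSetoid p n)
    rw [repW, Quotient.out_eq]
  obtain ⟨s, hs⟩ := h
  exact (rotSetoid p n).iseqv.symm ⟨s, hs⟩

lemma repW_rotZ (n : ℕ) (s : ZMod (p ^ n)) (w : Wd p n) :
    repW p n (rotZ p n s w) = repW p n w := by
  rw [repW, repW]
  congr 1
  apply Quotient.sound (s := rotSetoid p n)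
  exact (rotSetoid p n).iseqv.symm ⟨s, rfl⟩

noncomputable def cStep (c : ∀ i, tensorPowerOfRankTwo (p ^ i)) (n : ℕ) :
    tensorPowerOfRankTwo (p ^ n) :=
  Finsupp.equivFunOnFinite.symm (fun w =>
    if repW p n w = w then Dval p c n w / (p : ℤ) ^ (n - minPer p n w) else 0)

lemma Dval_congr (c c' : ∀ i, tensorPowerOfRankTwo (p ^ i)) (n : ℕ)
    (h : ∀ i, 1 ≤ i → i ≤ n - 1 → c i = c' i) (w : Wd p n) :
    Dval p c n w = Dval p c' n w := by
  rw [Dval, Dval]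
  congr 1
  apply Finset.sum_congr rfl
  intro i hi
  simp only [Finset.mem_Icc] at hi
  rw [h i hi.1 hi.2]

lemma cStep_congr (c c' : ∀ i, tensorPowerOfRankTwo (p ^ i)) (n : ℕ)
    (h : ∀ i, 1 ≤ i → i ≤ n - 1 → c i = c' i) : cStep p c n = cStep p c' n := by
  rw [cStep, cStep]
  congr 1
  funext w
  rw [Dval_congr p c c' n h w]

noncomputable def cFun : ∀ n : ℕ, tensorPowerOfRankTwo (p ^ n)
  | n => cStep p (fun i => if h : i < n then cFun i else 0) n
termination_by n => n
decreasing_by exact h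

lemma cFun_eq (n : ℕ) : cFun p n = cStep p (cFun p) n := by
  rw [cFun]
  apply cStep_congr
  intro i h1 hi
  rw [dif_pos (by omega)]

lemma cFun_apply (n : ℕ) (w : Wd p n) :
    cFun p n w = if repW p n w = w
      then Dval p (cFun p) n w / (p : ℤ) ^ (n - minPer p n w) else 0 := by
  rw [cFun_eq, cStep]
  simp

end S12
namespace S12
variable (p : ℕ) [∀ j : ℕ, NeZero (p ^ j)]

/-- The identity at level `n` for the family `c`. -/
def GProp (c : ∀ i, tensorPowerOfRankTwo (p ^ i)) (n : ℕ) : Prop :=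
  ∀ w : Wd p n, (1 : ℤ)
    = (if w = const p n 0 then 1 else 0) + (if w = const p n 1 then 1 else 0)
      + ∑ i ∈ Finset.Icc 1 n, tC p i n (c i) w

lemma key_dvd (hp : p.Prime) (c : ∀ i, tensorPowerOfRankTwo (p ^ i)) (n k : ℕ)
    (hn : 1 ≤ n) (hk : k ≤ n - 1) (v : Wd p k) (IH : GProp p c (n - 1)) :
    ((p : ℤ) ^ (n - k)) ∣ Dval p c n (emb p k n v) := by
  set m := n - 1 with hm
  have hkm : k ≤ m := hk
  have hkn : k ≤ n := by omega
  have hmn : m ≤ n := by omega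
  set w : Wd p n := emb p k n v with hw
  set w' : Wd p m := emb p k m v with hw'
  -- rewrite Dval as a sum of differences
  have hIH := IH w'
  have hc0 : (w = const p n 0) ↔ (w' = const p m 0) := by
    rw [hw, hw', emb_eq_const_iff p k n hkn, emb_eq_const_iff p k m hkm]
  have hc1 : (w = const p n 1) ↔ (w' = const p m 1) := by
    rw [hw, hw', emb_eq_const_iff p k n hkn, emb_eq_const_iff p k m hkm]
  have hδ0 : (if w = const p n 0 then (1:ℤ) else 0) = (if w' = const p m 0 then 1 else 0) :=
    if_congr hc0 rfl rfl
  have hδ1 : (if w = const p n 1 then (1:ℤ) else 0) = (if w' = const p m 1 then 1 else 0) :=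
    if_congr hc1 rfl rfl
  have hD : Dval p c n w
      = ∑ i ∈ Finset.Icc 1 m, (tC p i m (c i) w' - tC p i n (c i) w) := by
    rw [Dval, hδ0, hδ1, Finset.sum_sub_distrib]
    have : n - 1 = m := hm.symm
    rw [this]
    linarith [hIH]
  rw [hD]
  apply Finset.dvd_sum
  intro i hi
  simp only [Finset.mem_Icc] at hi
  obtain ⟨hi1, hi2⟩ := hi
  rw [tC, tC, ← Finset.sum_sub_distrib]
  by_cases hik : i ≤ k
  · -- i ≤ k : termwise divisibility
    apply Finset.dvd_sum
    intro j _
    have ha1 : aC p i m (c i) j w' = (aC p i k (c i) j v) ^ (p ^ (m - k)) := by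
      rw [hw']; exact aC_emb p i k m hik hkm (c i) j v
    have ha2 : aC p i n (c i) j w = (aC p i k (c i) j v) ^ (p ^ (n - k)) := by
      rw [hw]; exact aC_emb p i k n hik hkn (c i) j v
    rw [ha1, ha2]
    have hnk : n - k = (m - k) + 1 := by omega
    rw [hnk]
    exact int_fermat p hp _ (m - k)
  · -- k < i
    push_neg at hik
    have hki : k ≤ i := by omega
    have hin : i ≤ n := by omega
    set b : ℕ → ℤ := fun j => aC p i i (c i) j (emb p k i v) with hb
    have ha1 : ∀ j, aC p i m (c i) j w' = (b j) ^ (p ^ (m - i)) := by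
      intro j
      rw [hw', ← emb_comp p k i m hki v]
      exact aC_emb p i i m le_rfl hi2 (c i) j (emb p k i v)
    have ha2 : ∀ j, aC p i n (c i) j w = (b j) ^ (p ^ (n - i)) := by
      intro j
      rw [hw, ← emb_comp p k i n hki v]
      exact aC_emb p i i n le_rfl hin (c i) j (emb p k i v)
    have hcongr : ∀ j ∈ Finset.range (p ^ i),
        aC p i m (c i) j w' - aC p i n (c i) j w
          = (fun j => (b j) ^ (p ^ (m - i)) - (b j) ^ (p ^ (n - i))) j := by
      intro j _
      simp only
      rw [ha1 j, ha2 j]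
    rw [Finset.sum_congr rfl hcongr]
    have hper : ∀ j, (fun j => (b j) ^ (p ^ (m - i)) - (b j) ^ (p ^ (n - i))) (j + p ^ k)
        = (fun j => (b j) ^ (p ^ (m - i)) - (b j) ^ (p ^ (n - i))) j := by
      intro j
      simp only
      have : b (j + p ^ k) = b j := by
        rw [hb]
        exact aC_emb_period p i i k hki (c i) j v
      rw [this]
    have hsplit : p ^ i = p ^ (i - k) * p ^ k := by rw [← pow_add]; congr 1; omega
    rw [hsplit, sum_mul_period (p ^ k) (p ^ (i - k)) _ hper]
    have hdvd2 : ((p:ℤ) ^ (n - i)) ∣ ∑ j ∈ Finset.range (p ^ k),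
        (fun j => (b j) ^ (p ^ (m - i)) - (b j) ^ (p ^ (n - i))) j := by
      apply Finset.dvd_sum
      intro j _
      show ((p:ℤ) ^ (n - i)) ∣ (b j) ^ (p ^ (m - i)) - (b j) ^ (p ^ (n - i))
      have hni : n - i = (m - i) + 1 := by omega
      rw [hni]
      exact int_fermat p hp _ (m - i)
    have hfact : ((p:ℤ) ^ (n - k)) = (p:ℤ) ^ (i - k) * (p:ℤ) ^ (n - i) := by
      rw [← pow_add]; congr 1; omega
    rw [hfact]
    push_cast
    exact mul_dvd_mul_left _ hdvd2
end S12
namespace S12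
variable (p : ℕ) [∀ j : ℕ, NeZero (p ^ j)]

lemma prodC_self (n : ℕ) (cn : tensorPowerOfRankTwo (p ^ n)) (u : Wd p n) :
    prodC p n n cn u = cn u := by
  have h1 : p ^ (n - n) = 1 := by rw [Nat.sub_self, pow_zero]
  have hblk : ∀ l : ZMod (p ^ (n - n)), blk p n n u l = u := by
    intro l
    funext m
    rw [blk]
    have hl : l.val = 0 := by have := ZMod.val_lt l; omega
    rw [hl, zero_mul, zero_add, ZMod.natCast_val, ZMod.cast_id]
  rw [prodC, Finset.prod_congr rfl (fun l _ => by rw [hblk l]), Finset.prod_const,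
    Finset.card_univ, ZMod.card, h1, pow_one]

lemma rotZ_eq_rotN (n : ℕ) (s : ZMod (p ^ n)) (w : Wd p n) :
    rotZ p n s w = rotN p n s.val w := by
  rw [rotN, ZMod.natCast_val, ZMod.cast_id]

lemma Dval_rotZ (c : ∀ i, tensorPowerOfRankTwo (p ^ i)) (n : ℕ) (hp2 : 2 ≤ p)
    (s : ZMod (p ^ n)) (w : Wd p n) : Dval p c n (rotZ p n s w) = Dval p c n w := by
  rw [rotZ_eq_rotN]
  exact Dval_rot p c n hp2 s.val w

lemma tC_top (hp : p.Prime) (c : ∀ i, tensorPowerOfRankTwo (p ^ i)) (n : ℕ)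
    (hcn : c n = cStep p c n)
    (hdvd : ∀ w : Wd p n, ((p : ℤ) ^ (n - minPer p n w)) ∣ Dval p c n w) (w : Wd p n) :
    tC p n n (c n) w = Dval p c n w := by
  classical
  have hp2 : 2 ≤ p := hp.two_le
  have hcn_apply : ∀ u : Wd p n, (c n) u
      = if repW p n u = u then Dval p c n u / (p : ℤ) ^ (n - minPer p n u) else 0 := by
    intro u
    rw [hcn, cStep]
    simp
  rw [tC]
  have h1 : ∀ j, aC p n n (c n) j w = (c n) (rotN p n j w) := by
    intro j
    rw [aC, prodC_self]
  rw [Finset.sum_congr rfl (fun j _ => h1 j)]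
  rw [show (fun j : ℕ => (c n) (rotN p n j w)) = fun j : ℕ => (c n) (rotZ p n ((j:ℕ) : ZMod (p ^ n)) w) from rfl]
  rw [sum_range_zmod p n (fun s => (c n) (rotZ p n s w))]
  obtain ⟨s₀, hs₀⟩ := repW_rel p n w
  have h2 : ∀ s : ZMod (p ^ n), (c n) (rotZ p n s w)
      = if rotZ p n s w = repW p n w
          then Dval p c n w / (p : ℤ) ^ (n - minPer p n w) else 0 := by
    intro s
    rw [hcn_apply (rotZ p n s w)]
    have hrr : repW p n (rotZ p n s w) = repW p n w := repW_rotZ p n s w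
    by_cases hcond : rotZ p n s w = repW p n w
    · rw [if_pos (by rw [hrr, ← hcond]), if_pos hcond,
        Dval_rotZ p c n hp2 s w, minPer_rotZ p n s w]
    · rw [if_neg (by rw [hrr]; intro hh; exact hcond hh.symm), if_neg hcond]
  rw [Finset.sum_congr rfl (fun s _ => h2 s)]
  rw [Finset.sum_ite, Finset.sum_const, Finset.sum_const_zero, add_zero]
  have hcard : (Finset.univ.filter (fun s : ZMod (p ^ n) => rotZ p n s w = repW p n w)).card
      = p ^ (n - minPer p n w) := by
    rw [← card_stab p hp n w]
    apply Finset.card_bij (fun s _ => s - s₀)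
    · intro s hs
      simp only [Finset.mem_filter, Finset.mem_univ, true_and] at hs ⊢
      rw [← rotZ_eq_self_iff]
      rw [hs₀] at hs
      funext x
      have hx := congrFun hs (x + s₀)
      rw [rotZ, rotZ] at hx
      rw [rotZ]
      have e1 : x + s₀ - s = x - (s - s₀) := by ring
      have e2 : x + s₀ - s₀ = x := by ring
      rw [e1, e2] at hx
      rw [hx]
    · intro s1 h1' s2 h2' heq
      have : s1 - s₀ + s₀ = s2 - s₀ + s₀ := by rw [heq]
      simpa using this
    · intro u hu
      simp only [Finset.mem_filter, Finset.mem_univ, true_and] at hu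
      refine ⟨u + s₀, ?_, by ring⟩
      simp only [Finset.mem_filter, Finset.mem_univ, true_and]
      rw [hs₀]
      funext x
      rw [rotZ, rotZ]
      have hu' := (rotZ_eq_self_iff p n u w).mpr hu
      have hx := congrFun hu' (x - s₀)
      rw [rotZ] at hx
      have e1 : x - (u + s₀) = x - s₀ - u := by ring
      rw [e1, hx]
  rw [hcard]
  rw [nsmul_eq_mul]
  push_cast
  exact Int.mul_ediv_cancel' (hdvd w)

end S12
namespace S12
variable (p : ℕ) [∀ j : ℕ, NeZero (p ^ j)]

lemma G_zero (c : ∀ i, tensorPowerOfRankTwo (p ^ i)) : GProp p c 0 := by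
  intro w
  haveI : Subsingleton (ZMod (p ^ 0)) := by rw [pow_zero]; exact inferInstance
  have hconst : ∀ b : Fin 2, w 0 = b → w = const p 0 b := by
    intro b hb
    funext x
    rw [Subsingleton.elim x 0, hb]
    rfl
  have hne : const p 0 (0 : Fin 2) ≠ const p 0 1 := by
    intro h
    have := congrFun h 0
    simp [const] at this
  rw [show Finset.Icc 1 0 = ∅ from rfl, Finset.sum_empty, add_zero]
  have : w 0 = 0 ∨ w 0 = 1 := by omega
  rcases this with h | h
  · rw [if_pos (hconst 0 h), if_neg (by rw [hconst 0 h]; exact hne ∘ Eq.symm ∘ Eq.symm)]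
    · ring
  · rw [if_neg (by rw [hconst 1 h]; exact fun hh => hne hh.symm), if_pos (hconst 1 h)]
    ring

lemma G_succ (hp : p.Prime) (c : ∀ i, tensorPowerOfRankTwo (p ^ i)) (n : ℕ) (hn : 1 ≤ n)
    (hcn : c n = cStep p c n) (IH : GProp p c (n - 1)) : GProp p c n := by
  have hp2 : 2 ≤ p := hp.two_le
  -- divisibility
  have hdvd : ∀ w : Wd p n, ((p : ℤ) ^ (n - minPer p n w)) ∣ Dval p c n w := by
    intro w
    by_cases hmk : minPer p n w = n
    · rw [hmk, Nat.sub_self, pow_zero]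
      exact one_dvd _
    · have hk : minPer p n w ≤ n - 1 := by
        have := minPer_le p n w
        omega
      have hw : w = emb p (minPer p n w) n (res p n (minPer p n w) w) :=
        (emb_res p n (minPer p n w) (minPer_le p n w) w (minPer_spec p n w)).symm
      rw [show Dval p c n w = Dval p c n (emb p (minPer p n w) n (res p n (minPer p n w) w)) by
        rw [← hw]]
      exact key_dvd p hp c n (minPer p n w) hn hk _ IH
  intro w
  have htop := tC_top p hp c n hcn hdvd w
  have hsplit : Finset.Icc 1 n = insert n (Finset.Icc 1 (n - 1)) := by
    ext i
    simp only [Finset.mem_Icc, Finset.mem_insert]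
    omega
  rw [hsplit, Finset.sum_insert (by simp only [Finset.mem_Icc]; omega)]
  rw [htop, Dval]
  ring

lemma G_all (hp : p.Prime) (n : ℕ) : GProp p (cFun p) n := by
  induction n with
  | zero => exact G_zero p (cFun p)
  | succ n IH =>
      have := G_succ p hp (cFun p) (n + 1) (by omega) (cFun_eq p (n + 1))
      simp only [Nat.add_sub_cancel] at this
      exact this IH

end S12

/-- In `M = Z[s₀,s₁]`, there exist elements `c_i ∈ M^{⊗p^i}`, `i ≥ 1`, such that for every
`n ≥ 1`, `(s₀+s₁)^{⊗p^n} = s₀^{⊗p^n} + s₁^{⊗p^n} + ∑_{i=1}^{n} ∑_{j=0}^{p^i−1}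
σ^j (c_i^{⊗p^{n−i}})` in `M^{⊗p^n}` (everything written in the word model, where
`(s₀+s₁)^{⊗p^n}` is the sum of all words of length `p^n`). -/
theorem stmt_12 (p : ℕ) (hp : p.Prime) [∀ j : ℕ, NeZero (p ^ j)] :
    ∃ c : ∀ i : ℕ, tensorPowerOfRankTwo (p ^ i),
      ∀ n : ℕ, 1 ≤ n →
        (∑ w : ZMod (p ^ n) → Fin 2, Finsupp.single w (1 : ℤ) :
            tensorPowerOfRankTwo (p ^ n))
          = Finsupp.single (fun _ => (0 : Fin 2)) 1 + Finsupp.single (fun _ => (1 : Fin 2)) 1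
            + ∑ i ∈ Finset.Icc 1 n, ∑ j ∈ Finset.range (p ^ i),
                cyclicRotate (p ^ n) j (tensorPow p i n (c i)) := by
  classical
  refine ⟨S12.cFun p, ?_⟩
  intro n hn
  ext u
  rw [S12.sumAll_apply p n u]
  rw [Finsupp.add_apply, Finsupp.add_apply]
  rw [Finsupp.finset_sum_apply]
  have hterm : ∀ i ∈ Finset.Icc 1 n,
      (∑ j ∈ Finset.range (p ^ i), cyclicRotate (p ^ n) j (tensorPow p i n (S12.cFun p i))) u
        = S12.tC p i n (S12.cFun p i) u := by
    intro i hi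
    simp only [Finset.mem_Icc] at hi
    rw [Finsupp.finset_sum_apply, S12.tC]
    apply Finset.sum_congr rfl
    intro j _
    rw [S12.cyclicRotate_apply p n j _ u,
      S12.tensorPow_apply p i n hi.2 (S12.cFun p i) (S12.rotN p n j u)]
    rfl
  rw [Finset.sum_congr rfl hterm]
  have hG := S12.G_all p hp n u
  rw [Finsupp.single_apply, Finsupp.single_apply]
  have h0 : ((fun _ => (0 : Fin 2)) = u) ↔ (u = S12.const p n 0) := by
    constructor
    · intro h; exact h.symm
    · intro h; exact h.symm
  have h1 : ((fun _ => (1 : Fin 2)) = u) ↔ (u = S12.const p n 1) := by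
    constructor
    · intro h; exact h.symm
    · intro h; exact h.symm
  rw [if_congr h0 rfl rfl, if_congr h1 rfl rfl]
  exact hG
end
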